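/- Let k, r ≥ 2, let s_1, …, s_k ∈ R^d be distinct unit vectors, and set β₀ = L / min{‖g(x)‖ : x ∈ X, g(x) ≠ 0}, where L = 8(r−1)². Let β₁ ∈ (0, 1] and η ≥ 1 be real numbers. For every nonzero w ∈ R^d with ‖w‖ β₁ / β₀ ≥ η^{|X|}, there exists an angle θ ∈ (0, π/2] with β₀/‖w‖ ≤ sin θ ≤ β₀ η^{|X|−1}/‖w‖ such that every x ∈ X with x ∉ W_θ satisfies sin θ(x) ≥ η sin θ. -/

import Mathlib

attribute [local instance] Classical.propDecidable

open scoped RealInnerProductSpace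

/-- The defining condition of the space `X` of swaps: `x ∈ ℤ^k` with all `|x i| ≤ 2r-2`,
`∑ x i = 0` and `∑ |x i| ≤ 4r-4`. -/
def SwapCond (k r : ℕ) (x : Fin k → ℤ) : Prop :=
  (∀ i, |x i| ≤ 2 * (r : ℤ) - 2) ∧ (∑ i, x i = 0) ∧ (∑ i, |x i| ≤ 4 * (r : ℤ) - 4)

/-- `g x = ∑ i, x i • s i`. -/
noncomputable def gMap {k d : ℕ} (s : Fin k → EuclideanSpace ℝ (Fin d))
    (x : Fin k → ℤ) : EuclideanSpace ℝ (Fin d) :=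
  ∑ i, (x i : ℝ) • s i

/-- The sine of the angle `θ(x)` between `g x` and the hyperplane `w^⊥`
(`0` by convention when `g x = 0`, matching division-by-zero conventions). -/
noncomputable def sinAngle {k d : ℕ} (s : Fin k → EuclideanSpace ℝ (Fin d))
    (w : EuclideanSpace ℝ (Fin d)) (x : Fin k → ℤ) : ℝ :=
  |⟪gMap s x, w⟫| / (‖gMap s x‖ * ‖w‖)

/-- The constant `β₀ = L / min {‖g x‖ : x ∈ X, g x ≠ 0}`, with `L = 8(r-1)²`. -/
noncomputable def beta0 (k r : ℕ) {d : ℕ} (s : Fin k → EuclideanSpace ℝ (Fin d)) : ℝ :=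
  8 * ((r : ℝ) - 1) ^ 2 /
    sInf {t : ℝ | ∃ x, SwapCond k r x ∧ gMap s x ≠ 0 ∧ t = ‖gMap s x‖}

theorem exists_angle_with_jump (k r d : ℕ) (hk : 2 ≤ k) (hr : 2 ≤ r)
    (s : Fin k → EuclideanSpace ℝ (Fin d)) (hs : ∀ i, ‖s i‖ = 1)
    (hinj : Function.Injective s)
    (β₁ η : ℝ) (hβ₁ : 0 < β₁) (hβ₁' : β₁ ≤ 1) (hη : 1 ≤ η)
    (w : EuclideanSpace ℝ (Fin d)) (hw : w ≠ 0)
    (hbig : η ^ {x : Fin k → ℤ | SwapCond k r x}.ncard ≤ ‖w‖ * β₁ / beta0 k r s) :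
    ∃ θ : ℝ, 0 < θ ∧ θ ≤ Real.pi / 2 ∧
      beta0 k r s / ‖w‖ ≤ Real.sin θ ∧
      Real.sin θ ≤ beta0 k r s * η ^ ({x : Fin k → ℤ | SwapCond k r x}.ncard - 1) / ‖w‖ ∧
      ∀ x : Fin k → ℤ, SwapCond k r x → ¬ sinAngle s w x < Real.sin θ →
        η * Real.sin θ ≤ sinAngle s w x := by
  have hw' : 0 < ‖w‖ := norm_pos_iff.mpr hw
  -- X is finite
  have hXfin : {x : Fin k → ℤ | SwapCond k r x}.Finite := by
    apply Set.Finite.subset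
      (Set.Finite.pi (fun i : Fin k => Set.finite_Icc (-(2*(r:ℤ)-2)) (2*(r:ℤ)-2)))
    intro x hx
    rw [Set.mem_univ_pi]
    intro i
    exact Set.mem_Icc.mpr (abs_le.mp (hx.1 i))
  -- two distinct indices
  obtain ⟨i0, i1, hi01⟩ : ∃ i0 i1 : Fin k, i0 ≠ i1 :=
    ⟨⟨0, by omega⟩, ⟨1, by omega⟩, by simp [Fin.ext_iff]⟩
  set x₀ : Fin k → ℤ := fun i => (if i = i0 then 1 else 0) - (if i = i1 then 1 else 0) with hx₀
  have hx₀cond : SwapCond k r x₀ := by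
    refine ⟨fun i => ?_, ?_, ?_⟩
    · simp only [hx₀]
      split_ifs <;> norm_num <;> omega
    · simp [hx₀, Finset.sum_sub_distrib, Finset.sum_ite_eq']
    · calc ∑ i, |x₀ i| ≤ ∑ i, ((if i = i0 then (1:ℤ) else 0) + (if i = i1 then 1 else 0)) := by
            refine Finset.sum_le_sum (fun i _ => ?_)
            simp only [hx₀]
            split_ifs <;> norm_num
        _ = 2 := by simp [Finset.sum_add_distrib, Finset.sum_ite_eq']
        _ ≤ 4*(r:ℤ)-4 := by omega
  have hg0 : gMap s x₀ = s i0 - s i1 := by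
    have hpt : ∀ i, ((x₀ i : ℤ) : ℝ) • s i
        = (if i = i0 then s i0 else 0) - (if i = i1 then s i1 else 0) := by
      intro i
      by_cases h1 : i = i0
      · by_cases h2 : i = i1
        · exact absurd (h1.symm.trans h2) hi01
        · subst h1; simp [hx₀, h2]
      · by_cases h2 : i = i1
        · subst h2; simp [hx₀, h1]
        · simp [hx₀, h1, h2]
    rw [gMap]
    simp only [hpt]
    rw [Finset.sum_sub_distrib]
    simp [Finset.sum_ite_eq']
  have hgne : gMap s x₀ ≠ 0 := by
    rw [hg0]
    exact sub_ne_zero_of_ne (fun h => hi01 (hinj h))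
  -- positivity of beta0
  have hSne : {t : ℝ | ∃ x, SwapCond k r x ∧ gMap s x ≠ 0 ∧ t = ‖gMap s x‖}.Nonempty :=
    ⟨‖gMap s x₀‖, x₀, hx₀cond, hgne, rfl⟩
  have hSfin : {t : ℝ | ∃ x, SwapCond k r x ∧ gMap s x ≠ 0 ∧ t = ‖gMap s x‖}.Finite := by
    apply Set.Finite.subset (hXfin.image (fun x => ‖gMap s x‖))
    rintro t ⟨x, hx, -, rfl⟩
    exact ⟨x, hx, rfl⟩
  have hInf : 0 < sInf {t : ℝ | ∃ x, SwapCond k r x ∧ gMap s x ≠ 0 ∧ t = ‖gMap s x‖} := by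
    obtain ⟨x, -, hgx, hx⟩ := hSne.csInf_mem hSfin
    rw [hx]
    exact norm_pos_iff.mpr hgx
  have hβ₀ : 0 < beta0 k r s := by
    rw [beta0]
    apply div_pos _ hInf
    have h1 : (2:ℝ) ≤ (r:ℝ) := by exact_mod_cast hr
    nlinarith
  -- notation
  set n := {x : Fin k → ℤ | SwapCond k r x}.ncard with hn
  set α : ℝ := beta0 k r s / ‖w‖ with hαdef
  have hα : 0 < α := div_pos hβ₀ hw'
  have h0X : (0 : Fin k → ℤ) ∈ {x : Fin k → ℤ | SwapCond k r x} := by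
    refine ⟨fun i => ?_, by simp, ?_⟩
    · simp only [Pi.zero_apply, abs_zero]; omega
    · simp only [Pi.zero_apply, abs_zero, Finset.sum_const_zero]; omega
  set A : Finset (Fin k → ℤ) := hXfin.toFinset with hA
  have hcard : A.card = n :=
    (Set.ncard_eq_toFinset_card _ hXfin).symm
  have hn1 : 1 ≤ n := by
    have : A.Nonempty := ⟨0, hXfin.mem_toFinset.mpr h0X⟩
    have := Finset.card_pos.mpr this
    omega
  have hzero : sinAngle s w 0 = 0 := by
    simp [sinAngle, gMap]
  have hub : α * η ^ n ≤ β₁ := by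
    have h1 := (le_div_iff₀ hβ₀).mp hbig
    rw [hαdef, div_mul_eq_mul_div, div_le_iff₀ hw']
    nlinarith
  -- pigeonhole
  have key : ∃ j < n, ∀ x, SwapCond k r x →
      ¬ (α * η ^ j ≤ sinAngle s w x ∧ sinAngle s w x < α * η ^ (j+1)) := by
    by_contra hcon
    push_neg at hcon
    choose f hf1 hf2 hf3 using hcon
    set F : ℕ → (Fin k → ℤ) := fun j => if h : j < n then f j h else 0 with hF
    have hmapsto : ∀ j ∈ Finset.range n, F j ∈ A.erase 0 := by
      intro j hj
      rw [Finset.mem_range] at hj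
      simp only [hF, dif_pos hj]
      refine Finset.mem_erase.mpr ⟨?_, hXfin.mem_toFinset.mpr (hf1 j hj)⟩
      intro h0
      have h2 := hf2 j hj
      rw [h0, hzero] at h2
      have h3 : 0 < α * η ^ j := by positivity
      linarith
    have hlt : (A.erase 0).card < (Finset.range n).card := by
      rw [Finset.card_range, Finset.card_erase_of_mem (hXfin.mem_toFinset.mpr h0X), hcard]
      omega
    obtain ⟨j, hj, j', hj', hne', heq⟩ :=
      Finset.exists_ne_map_eq_of_card_lt_of_maps_to hlt hmapsto
    rw [Finset.mem_range] at hj hj'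
    have hkey : ∀ a b, (ha : a < n) → (hb : b < n) → a < b → F a ≠ F b := by
      intro a b ha hb hab
      simp only [hF, dif_pos ha, dif_pos hb]
      intro heq2
      have h1 := hf3 a ha
      have h2 := hf2 b hb
      rw [heq2] at h1
      have hmono : α * η ^ (a+1) ≤ α * η ^ b :=
        mul_le_mul_of_nonneg_left (pow_le_pow_right₀ hη (by omega)) hα.le
      linarith
    rcases lt_trichotomy j j' with h | h | h
    · exact hkey j j' hj hj' h heq
    · exact hne' h
    · exact hkey j' j hj' hj h heq.symm
  obtain ⟨j, hjn, hjgap⟩ := key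
  set t := α * η ^ j with ht
  have htpos : 0 < t := by positivity
  have htub : t ≤ α * η ^ n :=
    mul_le_mul_of_nonneg_left (pow_le_pow_right₀ hη hjn.le) hα.le
  have htle1 : t ≤ 1 := by linarith
  refine ⟨Real.arcsin t, Real.arcsin_pos.mpr htpos, Real.arcsin_le_pi_div_two t, ?_⟩
  rw [Real.sin_arcsin (by linarith) htle1]
  refine ⟨?_, ?_, ?_⟩
  · rw [ht]
    exact le_mul_of_one_le_right hα.le (one_le_pow₀ hη)
  · have h1 : t ≤ α * η ^ (n-1) :=
      mul_le_mul_of_nonneg_left (pow_le_pow_right₀ hη (by omega)) hα.le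
    calc t ≤ α * η ^ (n-1) := h1
      _ = beta0 k r s * η ^ (n-1) / ‖w‖ := by rw [hαdef]; ring
  · intro x hx hnl
    have h2 : α * η ^ (j+1) ≤ sinAngle s w x :=
      not_lt.mp (fun hlt => hjgap x hx ⟨not_lt.mp hnl, hlt⟩)
    have h3 : η * t = α * η ^ (j+1) := by rw [ht, pow_succ]; ring
    linarith
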